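/- Let V be a finite-dimensional representation of a group π over a field k of characteristic zero, which is semisimple (completely reducible), and let Φ : V × V → k be a π-invariant nondegenerate bilinear form. Then the restriction of Φ to the subspace of invariants V^π is nondegenerate. -/
import Mathlib


/-- Deligne's lemma (Weil II, p.218): if `V` is a finite-dimensional completely
reducible representation of a group `π` over a field `k` of characteristic zero,
and `Φ` is a `π`-invariant nondegenerate bilinear form on `V`, then the
restriction of `Φ` to the invariants `V^π` is nondegenerate. -/
theorem nondegenerate_on_invariants
    (k : Type) [Field k] [CharZero k]
    (V : Type) [AddCommGroup V] [Module k V] [FiniteDimensional k V]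
    (π : Type) [Group π] (ρ : Representation k π V)
    -- complete reducibility: every `π`-stable subspace has a `π`-stable complement
    (hss : ∀ W : Submodule k V, (∀ g : π, W.map (ρ g) ≤ W) →
      ∃ W' : Submodule k V, (∀ g : π, W'.map (ρ g) ≤ W') ∧ IsCompl W W')
    (Φ : V →ₗ[k] V →ₗ[k] k)
    (hinv : ∀ (g : π) (v w : V), Φ (ρ g v) (ρ g w) = Φ v w)
    (hnd : ∀ v : V, (∀ w : V, Φ v w = 0) → v = 0) :
    ∀ v ∈ ρ.invariants, (∀ w ∈ ρ.invariants, Φ v w = 0) → v = 0 := by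
  set S : Submodule k V := Submodule.span k {x : V | ∃ (g : π) (w : V), ρ g w - w = x}
    with hS
  have hgen : ∀ (g : π) (w : V), ρ g w - w ∈ S := fun g w =>
    Submodule.subset_span ⟨g, w, rfl⟩
  have hSstab : ∀ g : π, S.map (ρ g) ≤ S := by
    intro g
    rw [Submodule.map_span_le]
    rintro x ⟨g', w, rfl⟩
    have : ρ g (ρ g' w - w) = (ρ (g * g') w - w) - (ρ g w - w) := by
      simp only [map_mul, Module.End.mul_apply, map_sub]
      abel
    rw [this]
    exact sub_mem (hgen _ _) (hgen _ _)
  obtain ⟨C, hCstab, hcompl⟩ := hss S hSstab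
  have hCinv : ∀ c ∈ C, ∀ g : π, ρ g c = c := by
    intro c hc g
    have h1 : ρ g c - c ∈ S := hgen g c
    have h2 : ρ g c - c ∈ C := sub_mem (hCstab g ⟨c, hc, rfl⟩) hc
    have : ρ g c - c ∈ S ⊓ C := ⟨h1, h2⟩
    rw [hcompl.inf_eq_bot] at this
    have := (Submodule.mem_bot k).mp this
    linear_combination (norm := module) this
  intro v hv hφ
  apply hnd
  intro w
  have hw : w ∈ S ⊔ C := by rw [hcompl.sup_eq_top]; trivial
  obtain ⟨s, hs, c, hc, rfl⟩ := Submodule.mem_sup.mp hw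
  have hvs : Φ v s = 0 := by
    refine Submodule.span_induction ?_ ?_ ?_ ?_ hs
    · rintro x ⟨g, w', rfl⟩
      have h1 : Φ v (ρ g w') = Φ v w' := by
        have h := hinv g v w'
        rwa [hv g] at h
      simp [map_sub, h1]
    · simp
    · intro x y _ _ hx hy; simp [map_add, hx, hy]
    · intro a x _ hx; simp [map_smul, hx]
  have hvc : Φ v c = 0 := hφ c (fun g => hCinv c hc g)
  simp [map_add, hvs, hvc]
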